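/- arXiv:2303.11706 — 5 statements merged into one kernel-verified Lean document; each statement's English description precedes it below -/
import Mathlib

section
/- For any probability measures P and Q on a common measurable space and any real-valued random variable X that is integrable under both P and Q, (1/5)·(1 − H(P,Q)²)²·|E_P[X] − E_Q[X]| ≤ max( E_P[|X − E_P[X]|], E_Q[|X − E_Q[X]|] ). -/
open MeasureTheory

/-- The squared Hellinger distance `H(P,Q)²` between two measures on the same
measurable space, defined via the densities with respect to the dominating measure `P + Q`. -/
noncomputable def sqHellinger {Ω : Type*} [MeasurableSpace Ω] (P Q : Measure Ω) : ℝ :=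
  (1 / 2) * ∫ ω, (Real.sqrt ((P.rnDeriv (P + Q) ω).toReal)
    - Real.sqrt ((Q.rnDeriv (P + Q) ω).toReal)) ^ 2 ∂(P + Q)

theorem stmt1 {Ω : Type*} [MeasurableSpace Ω] (P Q : Measure Ω)
    [IsProbabilityMeasure P] [IsProbabilityMeasure Q]
    (X : Ω → ℝ) (hXP : Integrable X P) (hXQ : Integrable X Q) :
    (1 / 5) * (1 - sqHellinger P Q) ^ 2 * |(∫ ω, X ω ∂P) - ∫ ω, X ω ∂Q|
      ≤ max (∫ ω, |X ω - ∫ x, X x ∂P| ∂P) (∫ ω, |X ω - ∫ x, X x ∂Q| ∂Q) := by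
  set ν : Measure Ω := P + Q with hν
  set p : Ω → ℝ := fun ω => (P.rnDeriv ν ω).toReal with hp_def
  set q : Ω → ℝ := fun ω => (Q.rnDeriv ν ω).toReal with hq_def
  have hPν : P ≪ ν := Measure.absolutelyContinuous_of_le (Measure.le_add_right le_rfl)
  have hQν : Q ≪ ν := Measure.absolutelyContinuous_of_le (Measure.le_add_left le_rfl)
  have hp_meas : Measurable p := (Measure.measurable_rnDeriv P ν).ennreal_toReal
  have hq_meas : Measurable q := (Measure.measurable_rnDeriv Q ν).ennreal_toReal
  have hp_nonneg : ∀ ω, 0 ≤ p ω := fun ω => ENNReal.toReal_nonneg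
  have hq_nonneg : ∀ ω, 0 ≤ q ω := fun ω => ENNReal.toReal_nonneg
  have hp_int : Integrable p ν := Measure.integrable_toReal_rnDeriv
  have hq_int : Integrable q ν := Measure.integrable_toReal_rnDeriv
  have hp_one : ∫ ω, p ω ∂ν = 1 := by
    rw [hp_def, Measure.integral_toReal_rnDeriv hPν]; simp
  have hq_one : ∫ ω, q ω ∂ν = 1 := by
    rw [hq_def, Measure.integral_toReal_rnDeriv hQν]; simp
  set ρ : ℝ := ∫ ω, Real.sqrt (p ω) * Real.sqrt (q ω) ∂ν with hρ_def
  set s : ℝ := ∫ ω, min (p ω) (q ω) ∂ν with hs_def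
  -- integrability of auxiliary functions
  have hpq_int : Integrable (fun ω => p ω + q ω) ν := hp_int.add hq_int
  have hsq_meas : Measurable fun ω => Real.sqrt (p ω) * Real.sqrt (q ω) :=
    hp_meas.sqrt.mul hq_meas.sqrt
  have hsq_int : Integrable (fun ω => Real.sqrt (p ω) * Real.sqrt (q ω)) ν := by
    refine Integrable.mono' hpq_int hsq_meas.aestronglyMeasurable
      (Filter.Eventually.of_forall fun ω => ?_)
    have h1 := Real.sqrt_nonneg (p ω)
    have h2 := Real.sqrt_nonneg (q ω)
    have h3 := Real.sq_sqrt (hp_nonneg ω)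
    have h4 := Real.sq_sqrt (hq_nonneg ω)
    have h5 := sq_nonneg (Real.sqrt (p ω) - Real.sqrt (q ω))
    rw [Real.norm_eq_abs, abs_of_nonneg (mul_nonneg h1 h2)]
    nlinarith
  have hmin_int : Integrable (fun ω => min (p ω) (q ω)) ν := by
    refine Integrable.mono' hp_int (hp_meas.min hq_meas).aestronglyMeasurable
      (Filter.Eventually.of_forall fun ω => ?_)
    rw [Real.norm_eq_abs, abs_of_nonneg (le_min (hp_nonneg ω) (hq_nonneg ω))]
    exact min_le_left _ _
  have hρ_nonneg : 0 ≤ ρ :=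
    integral_nonneg fun ω => mul_nonneg (Real.sqrt_nonneg _) (Real.sqrt_nonneg _)
  have hs_nonneg : 0 ≤ s := integral_nonneg fun ω => le_min (hp_nonneg ω) (hq_nonneg ω)
  -- sqHellinger = 1 - ρ
  have hH : sqHellinger P Q = 1 - ρ := by
    have hexp : ∀ ω, (Real.sqrt (p ω) - Real.sqrt (q ω)) ^ 2
        = p ω + q ω - 2 * (Real.sqrt (p ω) * Real.sqrt (q ω)) := by
      intro ω
      have h3 := Real.sq_sqrt (hp_nonneg ω)
      have h4 := Real.sq_sqrt (hq_nonneg ω)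
      ring_nf
      nlinarith
    rw [sqHellinger]
    have : ∫ ω, (Real.sqrt (p ω) - Real.sqrt (q ω)) ^ 2 ∂ν
        = ∫ ω, (p ω + q ω - 2 * (Real.sqrt (p ω) * Real.sqrt (q ω))) ∂ν := by
      exact integral_congr_ae (Filter.Eventually.of_forall hexp)
    rw [show (∫ ω, (Real.sqrt ((P.rnDeriv (P + Q) ω).toReal)
        - Real.sqrt ((Q.rnDeriv (P + Q) ω).toReal)) ^ 2 ∂(P + Q))
        = ∫ ω, (Real.sqrt (p ω) - Real.sqrt (q ω)) ^ 2 ∂ν from rfl, this]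
    rw [integral_sub hpq_int (hsq_int.const_mul 2), integral_add hp_int hq_int,
      integral_const_mul, hp_one, hq_one, ← hρ_def]
    ring
  -- ρ² ≤ 2s via AM-GM with parameter
  have hkey : ∀ t : ℝ, 0 < t → ρ ≤ (t ^ 2 * s + 2) / (2 * t) := by
    intro t ht
    have hpt : ∀ ω, Real.sqrt (p ω) * Real.sqrt (q ω)
        ≤ (t ^ 2 * min (p ω) (q ω) + (p ω + q ω)) / (2 * t) := by
      intro ω
      rcases le_total (p ω) (q ω) with h | h
      · have h3 := Real.sq_sqrt (hp_nonneg ω)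
        have h4 := Real.sq_sqrt (hq_nonneg ω)
        have h5 := sq_nonneg (t * Real.sqrt (p ω) - Real.sqrt (q ω))
        rw [min_eq_left h, le_div_iff₀ (by positivity)]
        nlinarith [mul_nonneg (mul_nonneg (Real.sqrt_nonneg (p ω)) (Real.sqrt_nonneg (q ω))) ht.le]
      · have h3 := Real.sq_sqrt (hp_nonneg ω)
        have h4 := Real.sq_sqrt (hq_nonneg ω)
        have h5 := sq_nonneg (t * Real.sqrt (q ω) - Real.sqrt (p ω))
        rw [min_eq_right h, le_div_iff₀ (by positivity)]
        nlinarith [mul_nonneg (mul_nonneg (Real.sqrt_nonneg (p ω)) (Real.sqrt_nonneg (q ω))) ht.le]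
    calc ρ ≤ ∫ ω, (t ^ 2 * min (p ω) (q ω) + (p ω + q ω)) / (2 * t) ∂ν := by
          refine integral_mono hsq_int ?_ hpt
          exact (((hmin_int.const_mul _).add hpq_int).div_const _)
      _ = (t ^ 2 * s + 2) / (2 * t) := by
          simp_rw [div_eq_mul_inv]
          rw [integral_mul_const, integral_add (hmin_int.const_mul _) hpq_int,
            integral_const_mul, integral_add hp_int hq_int, hp_one, hq_one, ← hs_def]
          ring
  have hkey' : ∀ t : ℝ, 0 < t → ρ * (2 * t) ≤ t ^ 2 * s + 2 := by
    intro t ht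
    have h := hkey t ht
    rwa [le_div_iff₀ (by positivity)] at h
  have hρs : ρ ^ 2 ≤ 2 * s := by
    rcases eq_or_lt_of_le hρ_nonneg with hρ0 | hρ0
    · nlinarith
    rcases eq_or_lt_of_le hs_nonneg with hs0 | hs0
    · exfalso
      have h := hkey' (2 / ρ) (div_pos two_pos hρ0)
      rw [← hs0] at h
      have h2 : ρ * (2 * (2 / ρ)) = 4 := by field_simp; norm_num
      nlinarith
    · have h := hkey' (ρ / s) (div_pos hρ0 hs0)
      have hs' : s ≠ 0 := ne_of_gt hs0
      have h' := mul_le_mul_of_nonneg_right h hs0.le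
      have h2 : ρ * (2 * (ρ / s)) * s = 2 * ρ ^ 2 := by field_simp
      have h3 : ((ρ / s) ^ 2 * s + 2) * s = ρ ^ 2 + 2 * s := by field_simp
      rw [h2, h3] at h'
      linarith
  -- the mean-difference bound: Δ * s ≤ MAD_P + MAD_Q
  set a : ℝ := ∫ ω, X ω ∂P with ha_def
  set b : ℝ := ∫ ω, X ω ∂Q with hb_def
  set Δ : ℝ := |a - b| with hΔ_def
  have hXa_int : Integrable (fun ω => |X ω - a|) P := (hXP.sub (integrable_const a)).abs
  have hXbQ_int : Integrable (fun ω => |X ω - b|) Q := (hXQ.sub (integrable_const b)).abs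
  have hMP : ∫ ω, |X ω - a| * p ω ∂ν = ∫ ω, |X ω - a| ∂P := by
    have := integral_rnDeriv_smul hPν (f := fun ω => |X ω - a|)
    simp only [smul_eq_mul] at this
    rw [← this]
    exact integral_congr_ae (Filter.Eventually.of_forall fun ω => mul_comm _ _)
  have hMQ : ∫ ω, |X ω - b| * q ω ∂ν = ∫ ω, |X ω - b| ∂Q := by
    have := integral_rnDeriv_smul hQν (f := fun ω => |X ω - b|)
    simp only [smul_eq_mul] at this
    rw [← this]
    exact integral_congr_ae (Filter.Eventually.of_forall fun ω => mul_comm _ _)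
  have hMP_int : Integrable (fun ω => |X ω - a| * p ω) ν := by
    have := (integrable_rnDeriv_smul_iff hPν (f := fun ω => |X ω - a|)).mpr hXa_int
    simp only [smul_eq_mul] at this
    exact this.congr (Filter.Eventually.of_forall fun ω => mul_comm _ _)
  have hMQ_int : Integrable (fun ω => |X ω - b| * q ω) ν := by
    have := (integrable_rnDeriv_smul_iff hQν (f := fun ω => |X ω - b|)).mpr hXbQ_int
    simp only [smul_eq_mul] at this
    exact this.congr (Filter.Eventually.of_forall fun ω => mul_comm _ _)
  have hΔs : Δ * s ≤ (∫ ω, |X ω - a| ∂P) + ∫ ω, |X ω - b| ∂Q := by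
    have hpt : ∀ ω, Δ * min (p ω) (q ω) ≤ |X ω - a| * p ω + |X ω - b| * q ω := by
      intro ω
      have h1 : Δ ≤ |X ω - a| + |X ω - b| := by
        rw [hΔ_def]
        calc |a - b| ≤ |a - X ω| + |X ω - b| := abs_sub_le _ _ _
          _ = |X ω - a| + |X ω - b| := by rw [abs_sub_comm]
      have hm : 0 ≤ min (p ω) (q ω) := le_min (hp_nonneg ω) (hq_nonneg ω)
      calc Δ * min (p ω) (q ω) ≤ (|X ω - a| + |X ω - b|) * min (p ω) (q ω) :=
            mul_le_mul_of_nonneg_right h1 hm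
        _ = |X ω - a| * min (p ω) (q ω) + |X ω - b| * min (p ω) (q ω) := by ring
        _ ≤ |X ω - a| * p ω + |X ω - b| * q ω :=
            add_le_add (mul_le_mul_of_nonneg_left (min_le_left _ _) (abs_nonneg _))
              (mul_le_mul_of_nonneg_left (min_le_right _ _) (abs_nonneg _))
    calc Δ * s = ∫ ω, Δ * min (p ω) (q ω) ∂ν := by rw [hs_def, integral_const_mul]
      _ ≤ ∫ ω, (|X ω - a| * p ω + |X ω - b| * q ω) ∂ν :=
          integral_mono (hmin_int.const_mul Δ) (hMP_int.add hMQ_int) hpt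
      _ = (∫ ω, |X ω - a| ∂P) + ∫ ω, |X ω - b| ∂Q := by
          rw [integral_add hMP_int hMQ_int, hMP, hMQ]
  -- combine everything
  have hM1 : 0 ≤ ∫ ω, |X ω - a| ∂P := integral_nonneg fun ω => abs_nonneg _
  have hM2 : 0 ≤ ∫ ω, |X ω - b| ∂Q := integral_nonneg fun ω => abs_nonneg _
  have hmax1 : (∫ ω, |X ω - a| ∂P) ≤ max (∫ ω, |X ω - a| ∂P) (∫ ω, |X ω - b| ∂Q) :=
    le_max_left _ _
  have hmax2 : (∫ ω, |X ω - b| ∂Q) ≤ max (∫ ω, |X ω - a| ∂P) (∫ ω, |X ω - b| ∂Q) :=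
    le_max_right _ _
  have hΔ_nonneg : 0 ≤ Δ := abs_nonneg _
  rw [hH]
  have h1ρ : (1 - (1 - ρ)) ^ 2 = ρ ^ 2 := by ring
  rw [h1ρ]
  calc (1 / 5) * ρ ^ 2 * Δ ≤ (1 / 5) * (2 * s) * Δ := by
        apply mul_le_mul_of_nonneg_right _ hΔ_nonneg
        apply mul_le_mul_of_nonneg_left hρs (by norm_num)
    _ = (2 / 5) * (Δ * s) := by ring
    _ ≤ (2 / 5) * ((∫ ω, |X ω - a| ∂P) + ∫ ω, |X ω - b| ∂Q) := by
        apply mul_le_mul_of_nonneg_left hΔs (by norm_num)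
    _ ≤ (2 / 5) * (2 * max (∫ ω, |X ω - a| ∂P) (∫ ω, |X ω - b| ∂Q)) := by
        apply mul_le_mul_of_nonneg_left _ (by norm_num)
        linarith
    _ ≤ max (∫ ω, |X ω - a| ∂P) (∫ ω, |X ω - b| ∂Q) := by
        have : 0 ≤ max (∫ ω, |X ω - a| ∂P) (∫ ω, |X ω - b| ∂Q) := le_trans hM1 hmax1
        linarith
end

section
/- Let P and Q be probability measures on a common measurable space, both dominated by a σ-finite measure ν with ν-densities p and q, and let X be a real-valued random variable integrable under both P and Q. With the convention 0/0 := 0, one has (1 − H(P,Q)²) · |E_P[X] − E_Q[X]| ≤ ‖(p − q)/(p ∧ q)‖_{L∞(ν)} · max( E_P[|X − E_P[X]|], E_Q[|X − E_Q[X]|] ), where (p ∧ q)(ω) = min(p(ω), q(ω)) and ‖·‖_{L∞(ν)} denotes the ν-essential supremum of the absolute value. -/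
open MeasureTheory ENNReal

private lemma aux_tsub (x y : ℝ≥0∞) :
    (x - x ⊓ y) + (y - x ⊓ y) = (x - y) ⊔ (y - x) := by
  rcases le_total x y with h | h <;>
    simp [inf_eq_left.mpr h, inf_eq_right.mpr h, tsub_eq_zero_of_le h]

private lemma aux_key {Ω : Type*} [MeasurableSpace Ω] (ν : Measure Ω) [SigmaFinite ν]
    (p q : Ω → ℝ≥0∞) (hp : Measurable p) (hq : Measurable q)
    (P Q : Measure Ω) (hP : P = ν.withDensity p) (hQ : Q = ν.withDensity q)
    [IsProbabilityMeasure P] [IsProbabilityMeasure Q]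
    (X : Ω → ℝ) (hX : Measurable X) (hXP : Integrable X P) (hXQ : Integrable X Q)
    (hM : essSup (fun ω => ((p ω - q ω) ⊔ (q ω - p ω)) / (p ω ⊓ q ω)) ν ≠ ⊤) :
    ENNReal.ofReal |(∫ ω, X ω ∂P) - ∫ ω, X ω ∂Q|
      ≤ essSup (fun ω => ((p ω - q ω) ⊔ (q ω - p ω)) / (p ω ⊓ q ω)) ν
        * ENNReal.ofReal (∫ ω, |X ω - ∫ x, X x ∂P| ∂P) := by
  set M := essSup (fun ω => ((p ω - q ω) ⊔ (q ω - p ω)) / (p ω ⊓ q ω)) ν with hMdef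
  set a := ∫ ω, X ω ∂P with ha
  set b := ∫ ω, X ω ∂Q with hb
  set Y : Ω → ℝ := fun ω => X ω - a with hYdef
  have hYmeas : Measurable Y := hX.sub measurable_const
  have hYP : Integrable Y P := hXP.sub (integrable_const a)
  have hYQ : Integrable Y Q := hXQ.sub (integrable_const a)
  have hp_lt : ∀ᵐ ω ∂ν, p ω < ∞ := by
    refine ae_lt_top hp ?_
    rw [← setLIntegral_univ, ← withDensity_apply _ MeasurableSet.univ, ← hP]
    exact measure_ne_top _ _
  have hae : ∀ᵐ ω ∂ν, (p ω - q ω) ⊔ (q ω - p ω) ≤ M * (p ω ⊓ q ω) := by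
    filter_upwards [ae_le_essSup
      (fun ω => ((p ω - q ω) ⊔ (q ω - p ω)) / (p ω ⊓ q ω)) (μ := ν), hp_lt]
      with ω h1 h2
    rcases eq_or_ne (p ω ⊓ q ω) 0 with h0 | h0
    · have hr : (p ω - q ω) ⊔ (q ω - p ω) = 0 := by
        by_contra hr
        rw [h0, ENNReal.div_zero hr] at h1
        exact hM (top_le_iff.mp h1)
      simp [hr]
    · have hmne : p ω ⊓ q ω ≠ ∞ := (lt_of_le_of_lt (min_le_left _ _) h2).ne
      exact (ENNReal.div_le_iff h0 hmne).mp h1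
  have hPdec : P = ν.withDensity (fun ω => p ω ⊓ q ω)
      + ν.withDensity (fun ω => p ω - p ω ⊓ q ω) := by
    rw [hP, ← withDensity_add_left (hp.min hq)]
    congr 1
    funext ω
    exact (add_tsub_cancel_of_le (min_le_left _ _)).symm
  have hQdec : Q = ν.withDensity (fun ω => p ω ⊓ q ω)
      + ν.withDensity (fun ω => q ω - p ω ⊓ q ω) := by
    rw [hQ, ← withDensity_add_left (hp.min hq)]
    congr 1
    funext ω
    exact (add_tsub_cancel_of_le (min_le_right _ _)).symm
  have hYint1 := (integrable_add_measure.mp (hPdec ▸ hYP))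
  have hYint2 := (integrable_add_measure.mp (hQdec ▸ hYQ))
  have hYP0 : ∫ ω, Y ω ∂P = 0 := by
    rw [hYdef]
    rw [integral_sub hXP (integrable_const a), integral_const]
    simp [ha]
  have hYQb : ∫ ω, Y ω ∂Q = b - a := by
    rw [hYdef]
    rw [integral_sub hXQ (integrable_const a), integral_const]
    simp [hb]
  have habd : a - b = (∫ ω, Y ω ∂(ν.withDensity (fun ω => p ω - p ω ⊓ q ω)))
      - ∫ ω, Y ω ∂(ν.withDensity (fun ω => q ω - p ω ⊓ q ω)) := by
    have h1 : ∫ ω, Y ω ∂P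
        = (∫ ω, Y ω ∂(ν.withDensity (fun ω => p ω ⊓ q ω)))
          + ∫ ω, Y ω ∂(ν.withDensity (fun ω => p ω - p ω ⊓ q ω)) := by
      conv_lhs => rw [hPdec]
      exact integral_add_measure hYint1.1 hYint1.2
    have h2 : ∫ ω, Y ω ∂Q
        = (∫ ω, Y ω ∂(ν.withDensity (fun ω => p ω ⊓ q ω)))
          + ∫ ω, Y ω ∂(ν.withDensity (fun ω => q ω - p ω ⊓ q ω)) := by
      conv_lhs => rw [hQdec]
      exact integral_add_measure hYint2.1 hYint2.2
    rw [hYP0] at h1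
    rw [hYQb] at h2
    linarith
  have hwd : ∀ (f : Ω → ℝ≥0∞), Measurable f →
      ∫⁻ ω, ‖Y ω‖₊ ∂(ν.withDensity f) = ∫⁻ ω, f ω * ‖Y ω‖₊ ∂ν := by
    intro f hf
    rw [lintegral_withDensity_eq_lintegral_mul₀ hf.aemeasurable
      hYmeas.nnnorm.coe_nnreal_ennreal.aemeasurable]
    rfl
  calc ENNReal.ofReal |a - b|
      = ↑‖(∫ ω, Y ω ∂(ν.withDensity (fun ω => p ω - p ω ⊓ q ω)))
          - ∫ ω, Y ω ∂(ν.withDensity (fun ω => q ω - p ω ⊓ q ω))‖₊ := by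
        rw [habd]; exact (Real.enorm_eq_ofReal_abs _).symm
    _ ≤ ↑‖∫ ω, Y ω ∂(ν.withDensity (fun ω => p ω - p ω ⊓ q ω))‖₊
          + ↑‖∫ ω, Y ω ∂(ν.withDensity (fun ω => q ω - p ω ⊓ q ω))‖₊ := by
        rw [← ENNReal.coe_add]
        exact ENNReal.coe_le_coe.mpr (nnnorm_sub_le _ _)
    _ ≤ (∫⁻ ω, ‖Y ω‖₊ ∂(ν.withDensity (fun ω => p ω - p ω ⊓ q ω)))
          + ∫⁻ ω, ‖Y ω‖₊ ∂(ν.withDensity (fun ω => q ω - p ω ⊓ q ω)) :=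
        add_le_add (enorm_integral_le_lintegral_enorm _)
          (enorm_integral_le_lintegral_enorm _)
    _ = (∫⁻ ω, (p ω - p ω ⊓ q ω) * ‖Y ω‖₊ ∂ν)
          + ∫⁻ ω, (q ω - p ω ⊓ q ω) * ‖Y ω‖₊ ∂ν := by
        rw [hwd (fun ω => p ω - p ω ⊓ q ω) (hp.sub (hp.min hq)),
          hwd (fun ω => q ω - p ω ⊓ q ω) (hq.sub (hp.min hq))]
    _ = ∫⁻ ω, ((p ω - q ω) ⊔ (q ω - p ω)) * ‖Y ω‖₊ ∂ν := by
        rw [← lintegral_add_left (show Measurable (fun ω => (p ω - p ω ⊓ q ω) * (‖Y ω‖₊ : ℝ≥0∞)) from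
          (hp.sub (hp.min hq)).mul hYmeas.nnnorm.coe_nnreal_ennreal)]
        refine lintegral_congr fun ω => ?_
        rw [← add_mul, aux_tsub]
    _ ≤ ∫⁻ ω, M * ((p ω ⊓ q ω) * ‖Y ω‖₊) ∂ν := by
        refine lintegral_mono_ae (hae.mono fun ω h => ?_)
        rw [← mul_assoc]
        exact mul_le_mul_left h _
    _ = M * ∫⁻ ω, (p ω ⊓ q ω) * ‖Y ω‖₊ ∂ν := lintegral_const_mul' _ _ hM
    _ ≤ M * ∫⁻ ω, p ω * ‖Y ω‖₊ ∂ν :=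
        mul_le_mul_right (lintegral_mono fun ω =>
          mul_le_mul_left (min_le_left _ _) _) _
    _ = M * ∫⁻ ω, ‖Y ω‖₊ ∂P := by rw [hP, hwd _ hp]
    _ = M * ENNReal.ofReal (∫ ω, |X ω - a| ∂P) := by
        show M * ∫⁻ ω, ‖Y ω‖ₑ ∂P = _
        rw [← ofReal_integral_norm_eq_lintegral_enorm hYP]
        simp [hYdef, Real.norm_eq_abs]

private lemma aux_sing {Ω : Type*} [MeasurableSpace Ω]
    (P Q : Measure Ω) [IsProbabilityMeasure P] [IsProbabilityMeasure Q]
    (X : Ω → ℝ) (hX : Measurable X) (a b : ℝ) (hab : a ≠ b)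
    (haP : X =ᵐ[P] fun _ => a) (hbQ : X =ᵐ[Q] fun _ => b) :
    (1/2 : ℝ) * ∫ ω, (Real.sqrt ((P.rnDeriv (P + Q) ω).toReal)
      - Real.sqrt ((Q.rnDeriv (P + Q) ω).toReal)) ^ 2 ∂(P + Q) = 1 := by
  set μ := P + Q with hμ
  have hPμ : P ≪ μ := Measure.absolutelyContinuous_of_le (Measure.le_add_right le_rfl)
  have hQμ : Q ≪ μ := Measure.absolutelyContinuous_of_le (Measure.le_add_left le_rfl)
  set A : Set Ω := X ⁻¹' {a} with hA
  have hAmeas : MeasurableSet A := hX (measurableSet_singleton a)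
  have hPAc : P Aᶜ = 0 := by
    have := haP
    rw [Filter.EventuallyEq, ae_iff] at this
    convert this using 2
    rfl
  have hQA : Q A = 0 := by
    have h := hbQ
    rw [Filter.EventuallyEq, ae_iff] at h
    refine measure_mono_null (fun ω hω => ?_) h
    simp only [Set.mem_setOf_eq]
    simp only [hA, Set.mem_preimage, Set.mem_singleton_iff] at hω
    rw [hω]; exact hab
  have hg0 : ∀ᵐ ω ∂μ, ω ∈ A → Q.rnDeriv μ ω = 0 := by
    have h1 : ∫⁻ ω in A, Q.rnDeriv μ ω ∂μ = 0 := by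
      rw [Measure.setLIntegral_rnDeriv' hQμ hAmeas, hQA]
    rw [lintegral_eq_zero_iff (Measure.measurable_rnDeriv _ _)] at h1
    exact (ae_restrict_iff' hAmeas).mp h1
  have hf0 : ∀ᵐ ω ∂μ, ω ∈ Aᶜ → P.rnDeriv μ ω = 0 := by
    have h1 : ∫⁻ ω in Aᶜ, P.rnDeriv μ ω ∂μ = 0 := by
      rw [Measure.setLIntegral_rnDeriv' hPμ hAmeas.compl, hPAc]
    rw [lintegral_eq_zero_iff (Measure.measurable_rnDeriv _ _)] at h1
    exact (ae_restrict_iff' hAmeas.compl).mp h1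
  have hcross : ∀ᵐ ω ∂μ,
      (Real.sqrt ((P.rnDeriv μ ω).toReal) - Real.sqrt ((Q.rnDeriv μ ω).toReal)) ^ 2
        = (P.rnDeriv μ ω).toReal + (Q.rnDeriv μ ω).toReal := by
    filter_upwards [hg0, hf0] with ω h1 h2
    by_cases hω : ω ∈ A
    · rw [h1 hω]
      simp [Real.sq_sqrt ENNReal.toReal_nonneg]
    · rw [h2 hω]
      simp [Real.sq_sqrt ENNReal.toReal_nonneg]
  rw [integral_congr_ae hcross, integral_add Measure.integrable_toReal_rnDeriv
    Measure.integrable_toReal_rnDeriv, Measure.integral_toReal_rnDeriv hPμ,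
    Measure.integral_toReal_rnDeriv hQμ]
  simp [measure_univ]
  norm_num

/- In `ℝ≥0∞`, division satisfies the conventions `0 / 0 = 0` and `x / 0 = ∞` for `x ≠ 0`,
matching the convention of the statement. The quantity `((p ω - q ω) ⊔ (q ω - p ω))`
is `|p ω - q ω|` computed with truncated subtraction in `ℝ≥0∞`. -/
theorem stmt5 {Ω : Type*} [MeasurableSpace Ω] (ν : Measure Ω) [SigmaFinite ν]
    (p q : Ω → ℝ≥0∞) (hp : Measurable p) (hq : Measurable q)
    (P Q : Measure Ω) (hP : P = ν.withDensity p) (hQ : Q = ν.withDensity q)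
    [IsProbabilityMeasure P] [IsProbabilityMeasure Q]
    (X : Ω → ℝ) (hXP : Integrable X P) (hXQ : Integrable X Q) :
    ENNReal.ofReal ((1 - sqHellinger P Q) * |(∫ ω, X ω ∂P) - ∫ ω, X ω ∂Q|)
      ≤ essSup (fun ω => ((p ω - q ω) ⊔ (q ω - p ω)) / (p ω ⊓ q ω)) ν
        * ENNReal.ofReal
            (max (∫ ω, |X ω - ∫ x, X x ∂P| ∂P) (∫ ω, |X ω - ∫ x, X x ∂Q| ∂Q)) := by
  -- replace `X` by a measurable representative
  obtain ⟨X', hX'sm, hXX'⟩ := hXP.1.add_measure hXQ.1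
  have hXX'P : X =ᵐ[P] X' :=
    hXX'.filter_mono (ae_mono (Measure.le_add_right le_rfl))
  have hXX'Q : X =ᵐ[Q] X' :=
    hXX'.filter_mono (ae_mono (Measure.le_add_left le_rfl))
  have hX' : Measurable X' := hX'sm.measurable
  have eP : ∫ ω, X ω ∂P = ∫ ω, X' ω ∂P := integral_congr_ae hXX'P
  have eQ : ∫ ω, X ω ∂Q = ∫ ω, X' ω ∂Q := integral_congr_ae hXX'Q
  have eMP : ∫ ω, |X ω - ∫ x, X x ∂P| ∂P = ∫ ω, |X' ω - ∫ x, X' x ∂P| ∂P := by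
    rw [← eP]
    exact integral_congr_ae (hXX'P.mono fun ω h => by dsimp only; rw [h])
  have eMQ : ∫ ω, |X ω - ∫ x, X x ∂Q| ∂Q = ∫ ω, |X' ω - ∫ x, X' x ∂Q| ∂Q := by
    rw [← eQ]
    exact integral_congr_ae (hXX'Q.mono fun ω h => by dsimp only; rw [h])
  rw [eMP, eMQ, eP, eQ]
  have hXP' : Integrable X' P := hXP.congr hXX'P
  have hXQ' : Integrable X' Q := hXQ.congr hXX'Q
  clear eMP eMQ eP eQ hXX' hXX'P hXX'Q hXP hXQ hX'sm
  set M := essSup (fun ω => ((p ω - q ω) ⊔ (q ω - p ω)) / (p ω ⊓ q ω)) ν with hMdef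
  set a := ∫ ω, X' ω ∂P with ha
  set b := ∫ ω, X' ω ∂Q with hb
  set mx := max (∫ ω, |X' ω - a| ∂P) (∫ ω, |X' ω - b| ∂Q) with hmx
  by_cases hmx0 : mx ≤ 0
  · -- degenerate case: `X'` is a.e. constant under both measures
    have hMP : ∫ ω, |X' ω - a| ∂P = 0 :=
      le_antisymm (le_trans (le_max_left _ _) hmx0)
        (integral_nonneg fun ω => abs_nonneg _)
    have hMQ : ∫ ω, |X' ω - b| ∂Q = 0 :=
      le_antisymm (le_trans (le_max_right _ _) hmx0)
        (integral_nonneg fun ω => abs_nonneg _)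
    have haP : X' =ᵐ[P] fun _ => a := by
      have := (integral_eq_zero_iff_of_nonneg (fun ω => abs_nonneg (X' ω - a))
        ((hXP'.sub (integrable_const a)).abs)).mp hMP
      filter_upwards [this] with ω h
      have : |X' ω - a| = 0 := h
      have := abs_eq_zero.mp this
      linarith [sub_eq_zero.mp this]
    have hbQ : X' =ᵐ[Q] fun _ => b := by
      have := (integral_eq_zero_iff_of_nonneg (fun ω => abs_nonneg (X' ω - b))
        ((hXQ'.sub (integrable_const b)).abs)).mp hMQ
      filter_upwards [this] with ω h
      have : |X' ω - b| = 0 := h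
      have := abs_eq_zero.mp this
      linarith [sub_eq_zero.mp this]
    by_cases hab : a = b
    · simp [hab]
    · have hH : sqHellinger P Q = 1 := by
        rw [sqHellinger]
        exact aux_sing P Q X' hX' a b hab haP hbQ
      simp [hH]
  · push_neg at hmx0
    by_cases hMtop : M = ⊤
    · rw [hMtop, ENNReal.top_mul (ENNReal.ofReal_pos.mpr hmx0).ne']
      exact le_top
    · have hH0 : 0 ≤ sqHellinger P Q :=
        mul_nonneg (by norm_num) (integral_nonneg fun ω => sq_nonneg _)
      calc ENNReal.ofReal ((1 - sqHellinger P Q) * |a - b|)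
          ≤ ENNReal.ofReal |a - b| := by
            refine ENNReal.ofReal_le_ofReal ?_
            exact mul_le_of_le_one_left (abs_nonneg _) (by linarith)
        _ ≤ M * ENNReal.ofReal (∫ ω, |X' ω - a| ∂P) :=
            aux_key ν p q hp hq P Q hP hQ X' hX' hXP' hXQ' hMtop
        _ ≤ M * ENNReal.ofReal mx :=
            mul_le_mul_right (ENNReal.ofReal_le_ofReal (le_max_left _ _)) _
end

section
/- Let Ω = {ω_1, …, ω_M} be a finite set, and let P ≠ Q be two probability measures on Ω with probability mass functions p_j := P({ω_j}) and q_j := Q({ω_j}). With the convention 0/0 := 0, choose j* maximizing |p_j − q_j|/(p_j ∨ q_j) over j = 1, …, M, and define the random variable X* := 1(ω = ω_{j*}). Then max( E_P[|X* − E_P[X*]|], E_Q[|X* − E_Q[X*]|] ) ≤ (2 / max_{j} |p_j − q_j|/(p_j ∨ q_j)) · |E_P[X*] − E_Q[X*]|. -/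
open MeasureTheory

theorem stmt8 (M : ℕ) (P Q : Measure (Fin M))
    [IsProbabilityMeasure P] [IsProbabilityMeasure Q] (hPQ : P ≠ Q)
    (p q : Fin M → ℝ)
    (hp : ∀ j, p j = (P {j}).toReal) (hq : ∀ j, q j = (Q {j}).toReal)
    (jstar : Fin M)
    (hjstar : ∀ j, |p j - q j| / max (p j) (q j)
      ≤ |p jstar - q jstar| / max (p jstar) (q jstar))
    (Xstar : Fin M → ℝ) (hXstar : Xstar = fun ω => if ω = jstar then 1 else 0) :
    max (∫ ω, |Xstar ω - ∫ x, Xstar x ∂P| ∂P) (∫ ω, |Xstar ω - ∫ x, Xstar x ∂Q| ∂Q)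
      ≤ (2 / (|p jstar - q jstar| / max (p jstar) (q jstar)))
        * |(∫ ω, Xstar ω ∂P) - ∫ ω, Xstar ω ∂Q| := by
  -- basic facts about each probability measure
  have hmean : ∀ (μ : Measure (Fin M)) [IsProbabilityMeasure μ],
      ∫ ω, Xstar ω ∂μ = (μ {jstar}).toReal := by
    intro μ _
    rw [integral_fintype .of_finite, hXstar]
    simp [measureReal_def, smul_eq_mul, mul_ite, Finset.sum_ite_eq']
  have habs : ∀ (μ : Measure (Fin M)) [IsProbabilityMeasure μ],
      ∫ ω, |Xstar ω - ∫ x, Xstar x ∂μ| ∂μ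
        = 2 * (μ {jstar}).toReal * (1 - (μ {jstar}).toReal) := by
    intro μ _
    set a := (μ {jstar}).toReal with ha
    have ha0 : 0 ≤ a := ENNReal.toReal_nonneg
    have ha1 : a ≤ 1 := by rw [ha]; simpa using ENNReal.toReal_mono ENNReal.one_ne_top prob_le_one
    rw [hmean μ, ← ha]
    have hpt : ∀ ω, |Xstar ω - a| = (1 - 2 * a) * Xstar ω + a := by
      intro ω
      rw [hXstar]
      by_cases h : ω = jstar
      · simp only [h, if_pos rfl, eq_self_iff_true, if_true]
        rw [abs_of_nonneg (by linarith)]; ring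
      · simp only [if_neg h]
        rw [abs_of_nonpos (by linarith)]; ring
    simp_rw [hpt]
    simp_rw [integral_fintype .of_finite, measureReal_def]
    have hsum : ∑ x : Fin M, (μ {x}).toReal = 1 := by
      have : ∑ x : Fin M, μ {x} = μ Set.univ := by
        rw [← measure_biUnion_finset]
        · simp [Set.iUnion_of_singleton]
        · intro i _ j _ hij
          simp [Function.onFun, Set.disjoint_singleton, hij]
        · intro i _; exact measurableSet_singleton i
      have h2 := congrArg ENNReal.toReal this
      rw [measure_univ, ENNReal.toReal_sum (fun i _ => measure_ne_top μ _)] at h2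
      simpa using h2
    have hX : ∑ x : Fin M, (μ {x}).toReal • Xstar x = a := by
      rw [hXstar]; simp [smul_eq_mul, mul_ite, Finset.sum_ite_eq', ha]
    simp only [smul_eq_mul, mul_add]
    rw [Finset.sum_add_distrib]
    have : ∑ x : Fin M, (μ {x}).toReal * ((1 - 2 * a) * Xstar x)
        = (1 - 2 * a) * ∑ x : Fin M, (μ {x}).toReal * Xstar x := by
      rw [Finset.mul_sum]; congr 1; ext x; ring
    rw [this]
    simp only [smul_eq_mul] at hX
    rw [hX, ← Finset.sum_mul, hsum]
    ring
  -- positivity of the ratio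
  have hpnn : ∀ j, 0 ≤ p j := fun j => (hp j) ▸ ENNReal.toReal_nonneg
  have hqnn : ∀ j, 0 ≤ q j := fun j => (hq j) ▸ ENNReal.toReal_nonneg
  obtain ⟨j0, hj0⟩ : ∃ j, p j ≠ q j := by
    by_contra h
    push_neg at h
    apply hPQ
    rw [MeasureTheory.Measure.ext_iff_singleton]
    intro a
    have := h a
    rw [hp, hq] at this
    exact (ENNReal.toReal_eq_toReal_iff' (measure_ne_top P _) (measure_ne_top Q _)).1 this
  have hj0pos : 0 < |p j0 - q j0| / max (p j0) (q j0) := by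
    apply div_pos (abs_pos.2 (sub_ne_zero.2 hj0))
    by_contra h
    push_neg at h
    have h1 : p j0 = 0 := le_antisymm (le_trans (le_max_left _ _) h) (hpnn j0)
    have h2 : q j0 = 0 := le_antisymm (le_trans (le_max_right _ _) h) (hqnn j0)
    exact hj0 (h1.trans h2.symm)
  have hrpos : 0 < |p jstar - q jstar| / max (p jstar) (q jstar) :=
    lt_of_lt_of_le hj0pos (hjstar j0)
  set r := |p jstar - q jstar| / max (p jstar) (q jstar) with hr
  have hdpos : 0 < |p jstar - q jstar| := by
    by_contra h
    push_neg at h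
    have : |p jstar - q jstar| = 0 := le_antisymm h (abs_nonneg _)
    rw [hr, this, zero_div] at hrpos
    exact lt_irrefl 0 hrpos
  have hmpos : 0 < max (p jstar) (q jstar) := by
    by_contra h
    push_neg at h
    rw [hr] at hrpos
    have : |p jstar - q jstar| / max (p jstar) (q jstar) ≤ 0 :=
      div_nonpos_of_nonneg_of_nonpos (abs_nonneg _) h
    linarith
  -- final computation
  rw [habs P, habs Q, hmean P, hmean Q, ← hp, ← hq]
  have hRHS : 2 / r * |p jstar - q jstar| = 2 * max (p jstar) (q jstar) := by
    rw [hr]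
    field_simp
  rw [hRHS]
  have hp1 : p jstar ≤ 1 := by rw [hp]; simpa using ENNReal.toReal_mono ENNReal.one_ne_top prob_le_one
  have hq1 : q jstar ≤ 1 := by rw [hq]; simpa using ENNReal.toReal_mono ENNReal.one_ne_top prob_le_one
  apply max_le
  · nlinarith [hpnn jstar, le_max_left (p jstar) (q jstar)]
  · nlinarith [hqnn jstar, le_max_right (p jstar) (q jstar)]
end

section
/- Let P and Q be two probability distributions on the same measurable space with 0 < H(P,Q) < 1, and let X be a real-valued random variable with finite variance under both P and Q. Then ((E_P[X] − E_Q[X])² / (4 − 2·H(P,Q)²)) · (1/H(P,Q) − H(P,Q))² ≤ Var_P(X) + Var_Q(X). -/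
open MeasureTheory ProbabilityTheory

/-- The Hellinger distance `H(P,Q)` is the square root of `sqHellinger P Q`. -/
noncomputable def hellinger {Ω : Type*} [MeasurableSpace Ω] (P Q : Measure Ω) : ℝ :=
  Real.sqrt (sqHellinger P Q)

lemma sqHellinger_eq' {Ω : Type*} [MeasurableSpace Ω] (P Q : Measure Ω) :
    sqHellinger P Q = (1 / 2) * ∫ ω, (Real.sqrt ((P.rnDeriv (P + Q) ω).toReal)
      - Real.sqrt ((Q.rnDeriv (P + Q) ω).toReal)) ^ 2 ∂(P + Q) := rfl

lemma sqHellinger_nonneg' {Ω : Type*} [MeasurableSpace Ω] (P Q : Measure Ω) :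
    0 ≤ sqHellinger P Q :=
  mul_nonneg (by norm_num) (integral_nonneg fun ω => sq_nonneg _)

lemma cs_integral {α : Type*} [MeasurableSpace α] (μ : Measure α) (f g : α → ℝ)
    (hfg : Integrable (fun x => f x * g x) μ)
    (hf : Integrable (fun x => f x ^ 2) μ) (hg : Integrable (fun x => g x ^ 2) μ) :
    (∫ x, f x * g x ∂μ) ^ 2 ≤ (∫ x, f x ^ 2 ∂μ) * ∫ x, g x ^ 2 ∂μ := by
  set I := ∫ x, f x * g x ∂μ with hI
  set F := ∫ x, f x ^ 2 ∂μ with hF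
  set G := ∫ x, g x ^ 2 ∂μ with hG
  have key : ∀ t : ℝ, 0 ≤ G * (t * t) + (-2 * I) * t + F := by
    intro t
    have h0 : 0 ≤ ∫ x, (f x - t * g x) ^ 2 ∂μ := integral_nonneg fun x => sq_nonneg _
    have hre : (fun x => (f x - t * g x) ^ 2)
        = fun x => (f x ^ 2 - 2 * t * (f x * g x)) + t ^ 2 * g x ^ 2 := by
      funext x; ring
    have hi1 : Integrable (fun x => f x ^ 2 - 2 * t * (f x * g x)) μ := hf.sub (hfg.const_mul _)
    have hi2 : Integrable (fun x => t ^ 2 * g x ^ 2) μ := hg.const_mul _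
    rw [hre, integral_add hi1 hi2, integral_sub hf (hfg.const_mul _),
      integral_const_mul, integral_const_mul] at h0
    nlinarith [h0]
  have hd := discrim_le_zero key
  rw [discrim] at hd
  nlinarith [hd]

set_option maxHeartbeats 2000000 in
theorem stmt9 {Ω : Type*} [MeasurableSpace Ω] (P Q : Measure Ω)
    [IsProbabilityMeasure P] [IsProbabilityMeasure Q]
    (hH0 : 0 < hellinger P Q) (hH1 : hellinger P Q < 1)
    (X : Ω → ℝ) (hXP : MemLp X 2 P) (hXQ : MemLp X 2 Q) :
    (((∫ ω, X ω ∂P) - ∫ ω, X ω ∂Q) ^ 2 / (4 - 2 * hellinger P Q ^ 2))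
        * (1 / hellinger P Q - hellinger P Q) ^ 2
      ≤ variance X P + variance X Q := by
  set ν : Measure Ω := P + Q with hν
  have hPν : P ≪ ν := (Measure.le_add_right le_rfl).absolutelyContinuous
  have hQν : Q ≪ ν := (Measure.le_add_left le_rfl).absolutelyContinuous
  set p : Ω → ℝ := fun ω => (P.rnDeriv ν ω).toReal with hp_def
  set q : Ω → ℝ := fun ω => (Q.rnDeriv ν ω).toReal with hq_def
  have hpm : Measurable p := (Measure.measurable_rnDeriv P ν).ennreal_toReal
  have hqm : Measurable q := (Measure.measurable_rnDeriv Q ν).ennreal_toReal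
  set u : Ω → ℝ := fun ω => Real.sqrt (p ω) with hu_def
  set v : Ω → ℝ := fun ω => Real.sqrt (q ω) with hv_def
  have hum : Measurable u := hpm.sqrt
  have hvm : Measurable v := hqm.sqrt
  have hu2 : ∀ ω, u ω ^ 2 = p ω := fun ω => Real.sq_sqrt ENNReal.toReal_nonneg
  have hv2 : ∀ ω, v ω ^ 2 = q ω := fun ω => Real.sq_sqrt ENNReal.toReal_nonneg
  -- integral conversions
  have hIP : ∀ f : Ω → ℝ, ∫ ω, p ω * f ω ∂ν = ∫ ω, f ω ∂P := by
    intro f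
    simpa [smul_eq_mul] using integral_rnDeriv_smul hPν (f := f)
  have hIQ : ∀ f : Ω → ℝ, ∫ ω, q ω * f ω ∂ν = ∫ ω, f ω ∂Q := by
    intro f
    simpa [smul_eq_mul] using integral_rnDeriv_smul hQν (f := f)
  have hIntP : ∀ f : Ω → ℝ, Integrable f P → Integrable (fun ω => p ω * f ω) ν := by
    intro f hf
    simpa [smul_eq_mul] using (integrable_rnDeriv_smul_iff hPν).2 hf
  have hIntQ : ∀ f : Ω → ℝ, Integrable f Q → Integrable (fun ω => q ω * f ω) ν := by
    intro f hf
    simpa [smul_eq_mul] using (integrable_rnDeriv_smul_iff hQν).2 hf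
  -- constants
  set a := ∫ ω, X ω ∂P with ha_def
  set b := ∫ ω, X ω ∂Q with hb_def
  set c : ℝ := (a + b) / 2 with hc_def
  set d : ℝ := a - b with hd_def
  set g : Ω → ℝ := fun ω => X ω - c with hg_def
  set H := hellinger P Q with hH_def
  -- MemLp / integrability facts
  have hgP : MemLp g 2 P := hXP.sub (memLp_const c)
  have hgQ : MemLp g 2 Q := hXQ.sub (memLp_const c)
  have hX1P : Integrable X P := hXP.integrable one_le_two
  have hX1Q : Integrable X Q := hXQ.integrable one_le_two
  have hX2P : Integrable (fun ω => X ω ^ 2) P := hXP.integrable_sq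
  have hX2Q : Integrable (fun ω => X ω ^ 2) Q := hXQ.integrable_sq
  have hg1P : Integrable g P := hgP.integrable one_le_two
  have hg1Q : Integrable g Q := hgQ.integrable one_le_two
  have hg2P : Integrable (fun ω => g ω ^ 2) P := hgP.integrable_sq
  have hg2Q : Integrable (fun ω => g ω ^ 2) Q := hgQ.integrable_sq
  have hgν : AEStronglyMeasurable g ν :=
    hν ▸ aestronglyMeasurable_add_measure_iff.2
      ⟨hgP.aestronglyMeasurable, hgQ.aestronglyMeasurable⟩
  -- means of g
  have haP : ∫ ω, g ω ∂P = d / 2 := by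
    rw [hg_def, integral_sub hX1P (integrable_const c), integral_const]
    simp [hc_def, hd_def, ← ha_def]
    ring
  have hbQ : ∫ ω, g ω ∂Q = -(d / 2) := by
    rw [hg_def, integral_sub hX1Q (integrable_const c), integral_const]
    simp [hc_def, hd_def, ← hb_def]
    ring
  -- second moments of g
  have hg2P_eq : ∫ ω, g ω ^ 2 ∂P = variance X P + (d / 2) ^ 2 := by
    have hre : (fun ω => g ω ^ 2) = fun ω => (X ω ^ 2 - 2 * c * X ω) + c ^ 2 := by
      funext ω; rw [hg_def]; ring
    have hi1 : Integrable (fun ω => X ω ^ 2 - 2 * c * X ω) P := hX2P.sub (hX1P.const_mul _)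
    rw [hre, integral_add hi1 (integrable_const _), integral_sub hX2P (hX1P.const_mul _),
      integral_const_mul, integral_const, variance_eq_sub hXP]
    simp only [Pi.pow_apply, measure_univ, probReal_univ, ENNReal.toReal_one, one_smul, ← ha_def]
    rw [hc_def, hd_def]
    ring
  have hg2Q_eq : ∫ ω, g ω ^ 2 ∂Q = variance X Q + (d / 2) ^ 2 := by
    have hre : (fun ω => g ω ^ 2) = fun ω => (X ω ^ 2 - 2 * c * X ω) + c ^ 2 := by
      funext ω; rw [hg_def]; ring
    have hi1 : Integrable (fun ω => X ω ^ 2 - 2 * c * X ω) Q := hX2Q.sub (hX1Q.const_mul _)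
    rw [hre, integral_add hi1 (integrable_const _), integral_sub hX2Q (hX1Q.const_mul _),
      integral_const_mul, integral_const, variance_eq_sub hXQ]
    simp only [Pi.pow_apply, measure_univ, probReal_univ, ENNReal.toReal_one, one_smul, ← hb_def]
    rw [hc_def, hd_def]
    ring
  -- ν-integrability of the various functions
  have hpint : Integrable p ν := Measure.integrable_toReal_rnDeriv
  have hqint : Integrable q ν := Measure.integrable_toReal_rnDeriv
  have hpgν : Integrable (fun ω => p ω * g ω) ν := hIntP _ hg1P
  have hqgν : Integrable (fun ω => q ω * g ω) ν := hIntQ _ hg1Q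
  have hpg2ν : Integrable (fun ω => p ω * g ω ^ 2) ν := hIntP _ hg2P
  have hqg2ν : Integrable (fun ω => q ω * g ω ^ 2) ν := hIntQ _ hg2Q
  have hSint : Integrable (fun ω => (u ω - v ω) ^ 2) ν := by
    refine Integrable.mono' ((hpint.add hqint).const_mul 2)
      ((hum.sub hvm).pow_const 2).aestronglyMeasurable (ae_of_all _ fun ω => ?_)
    rw [Real.norm_eq_abs, abs_of_nonneg (sq_nonneg _)]
    simp only [Pi.add_apply]
    nlinarith [hu2 ω, hv2 ω, sq_nonneg (u ω + v ω)]
  have hTint : Integrable (fun ω => (u ω + v ω) ^ 2) ν := by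
    refine Integrable.mono' ((hpint.add hqint).const_mul 2)
      ((hum.add hvm).pow_const 2).aestronglyMeasurable (ae_of_all _ fun ω => ?_)
    rw [Real.norm_eq_abs, abs_of_nonneg (sq_nonneg _)]
    simp only [Pi.add_apply]
    nlinarith [hu2 ω, hv2 ω, sq_nonneg (u ω - v ω)]
  have hAint : Integrable (fun ω => (g ω * (u ω + v ω)) ^ 2) ν := by
    refine Integrable.mono' ((hpg2ν.add hqg2ν).const_mul 2)
      ((hgν.mul ((hum.add hvm).aestronglyMeasurable)).pow 2) (ae_of_all _ fun ω => ?_)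
    rw [Real.norm_eq_abs, abs_of_nonneg (sq_nonneg _)]
    simp only [Pi.add_apply]
    have h1 : (u ω + v ω) ^ 2 ≤ 2 * (p ω + q ω) := by
      nlinarith [hu2 ω, hv2 ω, sq_nonneg (u ω - v ω)]
    nlinarith [sq_nonneg (g ω), mul_le_mul_of_nonneg_left h1 (sq_nonneg (g ω))]
  have hBint : Integrable (fun ω => (g ω * (u ω - v ω)) ^ 2) ν := by
    refine Integrable.mono' ((hpg2ν.add hqg2ν).const_mul 2)
      ((hgν.mul ((hum.sub hvm).aestronglyMeasurable)).pow 2) (ae_of_all _ fun ω => ?_)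
    rw [Real.norm_eq_abs, abs_of_nonneg (sq_nonneg _)]
    simp only [Pi.add_apply]
    have h1 : (u ω - v ω) ^ 2 ≤ 2 * (p ω + q ω) := by
      nlinarith [hu2 ω, hv2 ω, sq_nonneg (u ω + v ω)]
    nlinarith [sq_nonneg (g ω), mul_le_mul_of_nonneg_left h1 (sq_nonneg (g ω))]
  -- the cross term equals p*g - q*g pointwise
  have hcross1 : (fun ω => (g ω * (u ω + v ω)) * (u ω - v ω))
      = fun ω => p ω * g ω - q ω * g ω := by
    funext ω
    rw [← hu2 ω, ← hv2 ω]; ring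
  have hcross2 : (fun ω => (g ω * (u ω - v ω)) * (u ω + v ω))
      = fun ω => p ω * g ω - q ω * g ω := by
    funext ω
    rw [← hu2 ω, ← hv2 ω]; ring
  have hcross_int : Integrable (fun ω => p ω * g ω - q ω * g ω) ν := hpgν.sub hqgν
  have hcross_val : ∫ ω, (p ω * g ω - q ω * g ω) ∂ν = d := by
    rw [integral_sub hpgν hqgν, hIP g, hIQ g, haP, hbQ]; ring
  -- abbreviations for the four integrals
  set S := ∫ ω, (u ω - v ω) ^ 2 ∂ν with hS_def
  set T := ∫ ω, (u ω + v ω) ^ 2 ∂ν with hT_def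
  set A := ∫ ω, (g ω * (u ω + v ω)) ^ 2 ∂ν with hA_def
  set B := ∫ ω, (g ω * (u ω - v ω)) ^ 2 ∂ν with hB_def
  -- Cauchy-Schwarz twice
  have hCS1 : d ^ 2 ≤ A * S := by
    have h := cs_integral ν (fun ω => g ω * (u ω + v ω)) (fun ω => u ω - v ω)
      (by rw [hcross1]; exact hcross_int) hAint hSint
    rwa [hcross1, hcross_val] at h
  have hCS2 : d ^ 2 ≤ B * T := by
    have h := cs_integral ν (fun ω => g ω * (u ω - v ω)) (fun ω => u ω + v ω)
      (by rw [hcross2]; exact hcross_int) hBint hTint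
    rwa [hcross2, hcross_val] at h
  -- A + B
  have hAB : A + B = 2 * (variance X P + variance X Q) + d ^ 2 := by
    have hre : (fun ω => (g ω * (u ω + v ω)) ^ 2 + (g ω * (u ω - v ω)) ^ 2)
        = fun ω => 2 * (p ω * g ω ^ 2) + 2 * (q ω * g ω ^ 2) := by
      funext ω
      rw [← hu2 ω, ← hv2 ω]; ring
    rw [hA_def, hB_def, ← integral_add hAint hBint, hre,
      integral_add (hpg2ν.const_mul 2) (hqg2ν.const_mul 2), integral_const_mul,
      integral_const_mul, hIP, hIQ, hg2P_eq, hg2Q_eq]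
    ring
  -- S + T = 4
  have hST : S + T = 4 := by
    have hre : (fun ω => (u ω - v ω) ^ 2 + (u ω + v ω) ^ 2)
        = fun ω => 2 * p ω + 2 * q ω := by
      funext ω
      rw [← hu2 ω, ← hv2 ω]; ring
    rw [hS_def, hT_def, ← integral_add hSint hTint, hre,
      integral_add (hpint.const_mul 2) (hqint.const_mul 2), integral_const_mul,
      integral_const_mul, Measure.integral_toReal_rnDeriv hPν,
      Measure.integral_toReal_rnDeriv hQν]
    simp only [measure_univ, probReal_univ, ENNReal.toReal_one]
    norm_num
  -- S = 2 H²
  have hH2 : H ^ 2 = sqHellinger P Q := by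
    rw [hH_def, hellinger, Real.sq_sqrt (sqHellinger_nonneg' P Q)]
  have hsqS : sqHellinger P Q = (1 / 2) * S := by
    rw [sqHellinger_eq' P Q, hS_def, ← hν]
  have hSval : S = 2 * H ^ 2 := by
    rw [hH2, hsqS]; ring
  clear_value ν p q u v a b c d g H S T A B
  have hTval : T = 4 - 2 * H ^ 2 := by linarith
  -- final algebra
  have hHpos : 0 < H := hH0
  have hH2lt : H ^ 2 < 1 := by nlinarith
  have hSpos : 0 < S := by nlinarith
  have hTpos : 0 < T := by nlinarith
  have k1 : d ^ 2 * T ≤ A * S * T := mul_le_mul_of_nonneg_right hCS1 hTpos.le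
  have k2 : d ^ 2 * S ≤ B * T * S := mul_le_mul_of_nonneg_right hCS2 hSpos.le
  have key : 4 * d ^ 2 ≤ (2 * (variance X P + variance X Q) + d ^ 2) * (S * T) := by
    have h4 : d ^ 2 * S + d ^ 2 * T = 4 * d ^ 2 := by rw [← hST]; ring
    have h5 : A * S * T + B * T * S
        = (2 * (variance X P + variance X Q) + d ^ 2) * (S * T) := by rw [← hAB]; ring
    linarith [k1, k2]
  have hgoal_eq : d ^ 2 / (4 - 2 * H ^ 2) * (1 / H - H) ^ 2
      = d ^ 2 * (1 - H ^ 2) ^ 2 / (H ^ 2 * (4 - 2 * H ^ 2)) := by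
    field_simp
  rw [hgoal_eq, div_le_iff₀ (mul_pos (pow_pos hHpos 2)
    (by linarith : (0:ℝ) < 4 - 2 * H ^ 2))]
  rw [hSval, hTval] at key
  nlinarith [key]
end

section
/- Let (P_θ : θ ∈ Θ) with Θ ⊆ ℝ be a statistical model of probability measures on a common measurable space, and let θ̂ be a real-valued estimator (a measurable function of the data) with finite variance under every P_θ. Define Bias_θ(θ̂) := E_θ[θ̂] − θ and r(θ, θ′) := H(P_θ, P_{θ′}). Let B ≥ 0 and suppose sup_{θ ∈ Θ} |Bias_θ(θ̂)| ≤ B. Then for any θ, θ′ ∈ Θ with |θ − θ′| ≥ 4B and 0 < r(θ, θ′) < 1, one has ((θ − θ′)²/4) / (4 − 2·r(θ, θ′)²) · (1/r(θ, θ′) − r(θ, θ′))² ≤ 2·sup_{θ ∈ Θ} Var_θ(θ̂). -/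
open MeasureTheory ProbabilityTheory

private lemma integral_sq_cauchy_schwarz' {Ω : Type*} [MeasurableSpace Ω] {ν : Measure Ω}
    {a b : Ω → ℝ} (ha : MemLp a 2 ν) (hb : MemLp b 2 ν) :
    (∫ x, a x * b x ∂ν) ^ 2 ≤ (∫ x, a x ^ 2 ∂ν) * (∫ x, b x ^ 2 ∂ν) := by
  let A : Lp ℝ 2 ν := ha.toLp a
  let Bb : Lp ℝ 2 ν := hb.toLp b
  have hab : ∫ x, a x * b x ∂ν = inner (𝕜 := ℝ) A Bb := by
    rw [MeasureTheory.L2.inner_def]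
    refine (integral_congr_ae ?_).symm
    filter_upwards [ha.coeFn_toLp, hb.coeFn_toLp] with x hx hy
    rw [hx, hy]; simp [RCLike.inner_apply, mul_comm]
  have hAA : ∫ x, a x ^ 2 ∂ν = ‖A‖ ^ 2 := by
    rw [← real_inner_self_eq_norm_sq, MeasureTheory.L2.inner_def]
    refine (integral_congr_ae ?_).symm
    filter_upwards [ha.coeFn_toLp] with x hx
    rw [hx]; simp [RCLike.inner_apply, sq]
  have hBB : ∫ x, b x ^ 2 ∂ν = ‖Bb‖ ^ 2 := by
    rw [← real_inner_self_eq_norm_sq, MeasureTheory.L2.inner_def]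
    refine (integral_congr_ae ?_).symm
    filter_upwards [hb.coeFn_toLp] with x hx
    rw [hx]; simp [RCLike.inner_apply, sq]
  rw [hab, hAA, hBB]
  calc (inner (𝕜 := ℝ) A Bb) ^ 2 ≤ (‖A‖ * ‖Bb‖) ^ 2 := by
        rw [← sq_abs]
        exact pow_le_pow_left₀ (abs_nonneg _) (abs_real_inner_le_norm A Bb) 2
    _ = ‖A‖ ^ 2 * ‖Bb‖ ^ 2 := by ring

private lemma hellinger_alg {h D W : ℝ} (h0 : 0 ≤ h) (h1 : h ≤ 1)
    (hkey2 : 4*D^2 ≤ (2*h*(4-2*h))*(2*W+D^2)) :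
    D^2*(1-h)^2 ≤ 2*h*(2-h)*W := by nlinarith [hkey2]

private lemma key' {Ω : Type*} [MeasurableSpace Ω] (Pm Qm : Measure Ω)
    [IsProbabilityMeasure Pm] [IsProbabilityMeasure Qm]
    (T : Ω → ℝ) (hT : Measurable T) (hP2 : MemLp T 2 Pm) (hQ2 : MemLp T 2 Qm) :
    ((∫ ω, T ω ∂Pm) - ∫ ω, T ω ∂Qm) ^ 2 * (1 - sqHellinger Pm Qm) ^ 2
      ≤ 2 * sqHellinger Pm Qm * (2 - sqHellinger Pm Qm)
        * (variance T Pm + variance T Qm) := by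
  set ν : Measure Ω := Pm + Qm with hν
  have hacP : Pm ≪ ν := by
    rw [hν]; exact Measure.absolutelyContinuous_of_le (Measure.le_add_right le_rfl)
  have hacQ : Qm ≪ ν := by
    rw [hν]
    refine Measure.absolutelyContinuous_of_le (fun s => ?_)
    simp [Measure.coe_add]
  set p : Ω → ℝ := fun ω => (Pm.rnDeriv ν ω).toReal with hp_def
  set q : Ω → ℝ := fun ω => (Qm.rnDeriv ν ω).toReal with hq_def
  set f : Ω → ℝ := fun ω => Real.sqrt (p ω) with hf_def
  set g : Ω → ℝ := fun ω => Real.sqrt (q ω) with hg_def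
  have hpm : Measurable p := (Measure.measurable_rnDeriv Pm ν).ennreal_toReal
  have hqm : Measurable q := (Measure.measurable_rnDeriv Qm ν).ennreal_toReal
  have hfm : Measurable f := hpm.sqrt
  have hgm : Measurable g := hqm.sqrt
  -- a.e. facts
  have hadd : ∀ᵐ ω ∂ν, p ω + q ω = 1 := by
    have h1 := Measure.rnDeriv_add Pm Qm ν
    rw [← hν] at h1
    have h2 := Measure.rnDeriv_self ν
    have h3 := Measure.rnDeriv_lt_top Pm ν
    have h4 := Measure.rnDeriv_lt_top Qm ν
    filter_upwards [h1, h2, h3, h4] with ω e1 e2 e3 e4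
    have e5 : Pm.rnDeriv ν ω + Qm.rnDeriv ν ω = 1 := by
      rw [← Pi.add_apply, ← e1, e2]
    have := congrArg ENNReal.toReal e5
    rwa [ENNReal.toReal_add e3.ne e4.ne] at this
  have haef : ∀ᵐ ω ∂ν, f ω ^ 2 = p ω ∧ g ω ^ 2 = q ω ∧ p ω + q ω = 1
      ∧ 0 ≤ f ω ∧ f ω ≤ 1 ∧ 0 ≤ g ω ∧ g ω ≤ 1 := by
    filter_upwards [hadd] with ω h1
    have hp0 : 0 ≤ p ω := ENNReal.toReal_nonneg
    have hq0 : 0 ≤ q ω := ENNReal.toReal_nonneg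
    have hp1 : p ω ≤ 1 := by linarith
    have hq1 : q ω ≤ 1 := by linarith
    refine ⟨Real.sq_sqrt hp0, Real.sq_sqrt hq0, h1, Real.sqrt_nonneg _, ?_, Real.sqrt_nonneg _, ?_⟩
    · calc f ω ≤ Real.sqrt 1 := Real.sqrt_le_sqrt hp1
        _ = 1 := Real.sqrt_one
    · calc g ω ≤ Real.sqrt 1 := Real.sqrt_le_sqrt hq1
        _ = 1 := Real.sqrt_one
  -- helpers for bounded functions
  have hbdd : ∀ (φ : Ω → ℝ), Measurable φ → (∀ᵐ ω ∂ν, ‖φ ω‖ ≤ 2) → MemLp φ 2 ν := by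
    intro φ hφ hb
    refine MemLp.of_le (memLp_const (2:ℝ)) hφ.aestronglyMeasurable ?_
    filter_upwards [hb] with ω hω
    rw [Real.norm_eq_abs (2:ℝ), abs_of_nonneg (by norm_num : (0:ℝ) ≤ 2)]
    exact hω
  -- the Hellinger integrals
  have hsq : sqHellinger Pm Qm = (1/2) * ∫ ω, (f ω - g ω)^2 ∂ν := by
    rw [sqHellinger, ← hν]
  have hmemφ : MemLp (fun ω => f ω - g ω) 2 ν := by
    refine hbdd _ (hfm.sub hgm) ?_
    filter_upwards [haef] with ω ⟨_, _, _, hf0, hf1, hg0, hg1⟩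
    rw [Real.norm_eq_abs]
    rw [abs_le]; constructor <;> linarith
  have hmemψ : MemLp (fun ω => f ω + g ω) 2 ν := by
    refine hbdd _ (hfm.add hgm) ?_
    filter_upwards [haef] with ω ⟨_, _, _, hf0, hf1, hg0, hg1⟩
    rw [Real.norm_eq_abs]
    rw [abs_le]; constructor <;> linarith
  have hint_fg : Integrable (fun ω => f ω * g ω) ν := by
    refine ⟨(hfm.mul hgm).aestronglyMeasurable, HasFiniteIntegral.of_bounded (C := 2) ?_⟩
    filter_upwards [haef] with ω ⟨_, _, _, hf0, hf1, hg0, hg1⟩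
    rw [Real.norm_eq_abs, abs_of_nonneg (mul_nonneg hf0 hg0)]
    nlinarith
  have hIfg : ∫ ω, f ω * g ω ∂ν = 1 - sqHellinger Pm Qm := by
    have hcongr : ∫ ω, (f ω - g ω)^2 ∂ν = ∫ ω, (1 - 2*(f ω * g ω)) ∂ν := by
      refine integral_congr_ae ?_
      filter_upwards [haef] with ω ⟨e1, e2, e3, _⟩
      have : (f ω - g ω)^2 = f ω^2 + g ω^2 - 2*(f ω * g ω) := by ring
      rw [this, e1, e2]; linarith
    have h2 : ∫ ω, (1 - 2*(f ω * g ω)) ∂ν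
        = ∫ ω, (1:ℝ) ∂ν - 2 * ∫ ω, f ω * g ω ∂ν := by
      rw [integral_sub (integrable_const 1) (hint_fg.const_mul 2), integral_const_mul]
    have h3 : ∫ ω, (1:ℝ) ∂ν = 2 := by
      simp [hν, ENNReal.toReal_add]; norm_num
      simp [Measure.real_def, ENNReal.toReal_add]; norm_num
    rw [hcongr, h2, h3] at hsq
    linarith
  have hphi : ∫ ω, (f ω - g ω)^2 ∂ν = 2 * sqHellinger Pm Qm := by linarith [hsq]
  have hpsi : ∫ ω, (f ω + g ω)^2 ∂ν = 4 - 2 * sqHellinger Pm Qm := by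
    have hcongr : ∫ ω, (f ω + g ω)^2 ∂ν = ∫ ω, (1 + 2*(f ω * g ω)) ∂ν := by
      refine integral_congr_ae ?_
      filter_upwards [haef] with ω ⟨e1, e2, e3, _⟩
      have : (f ω + g ω)^2 = f ω^2 + g ω^2 + 2*(f ω * g ω) := by ring
      rw [this, e1, e2]; linarith
    have h2 : ∫ ω, (1 + 2*(f ω * g ω)) ∂ν
        = ∫ ω, (1:ℝ) ∂ν + 2 * ∫ ω, f ω * g ω ∂ν := by
      rw [integral_add (integrable_const 1) (hint_fg.const_mul 2), integral_const_mul]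
    have h3 : ∫ ω, (1:ℝ) ∂ν = 2 := by
      simp [hν, ENNReal.toReal_add]; norm_num
      simp [Measure.real_def, ENNReal.toReal_add]; norm_num
    rw [hcongr, h2, h3, hIfg]; ring
  have h0 : 0 ≤ sqHellinger Pm Qm := by
    rw [hsq]
    have : 0 ≤ ∫ ω, (f ω - g ω)^2 ∂ν := integral_nonneg fun ω => sq_nonneg _
    linarith
  have h_le_one : sqHellinger Pm Qm ≤ 1 := by
    have : 0 ≤ ∫ ω, f ω * g ω ∂ν := by
      refine integral_nonneg_of_ae ?_
      filter_upwards [haef] with ω ⟨_, _, _, hf0, _, hg0, _⟩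
      exact mul_nonneg hf0 hg0
    linarith [hIfg]
  -- the estimator part
  set μ1 : ℝ := ∫ ω, T ω ∂Pm with hμ1
  set μ2 : ℝ := ∫ ω, T ω ∂Qm with hμ2
  set c : ℝ := (μ1 + μ2)/2 with hc
  set u : Ω → ℝ := fun ω => T ω - c with hu_def
  set D : ℝ := μ1 - μ2 with hDdef
  have hum : Measurable u := hT.sub measurable_const
  have hTν : MemLp T 2 ν := by
    refine (memLp_two_iff_integrable_sq hT.aestronglyMeasurable).mpr ?_
    rw [hν]
    exact integrable_add_measure.mpr ⟨hP2.integrable_sq, hQ2.integrable_sq⟩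
  have huν : MemLp u 2 ν := hTν.sub (memLp_const c)
  have huP : MemLp u 2 Pm := hP2.sub (memLp_const c)
  have huQ : MemLp u 2 Qm := hQ2.sub (memLp_const c)
  have hIuP : ∫ ω, u ω ∂Pm = μ1 - c := by
    rw [hu_def, integral_sub (hP2.integrable one_le_two) (integrable_const c)]
    simp [hμ1]
  have hIuQ : ∫ ω, u ω ∂Qm = μ2 - c := by
    rw [hu_def, integral_sub (hQ2.integrable one_le_two) (integrable_const c)]
    simp [hμ2]
  have hPu : ∫ ω, (Pm.rnDeriv ν ω).toReal * u ω ∂ν = μ1 - c := by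
    rw [← hIuP]
    simpa [smul_eq_mul] using MeasureTheory.integral_rnDeriv_smul hacP (f := u)
  have hQu : ∫ ω, (Qm.rnDeriv ν ω).toReal * u ω ∂ν = μ2 - c := by
    rw [← hIuQ]
    simpa [smul_eq_mul] using MeasureTheory.integral_rnDeriv_smul hacQ (f := u)
  have hint_pu : Integrable (fun ω => (Pm.rnDeriv ν ω).toReal * u ω) ν := by
    refine Integrable.mono (huν.integrable one_le_two) ((hpm.mul hum).aestronglyMeasurable) ?_
    filter_upwards [hadd] with ω e3
    have hp0 : 0 ≤ p ω := ENNReal.toReal_nonneg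
    have hq0 : 0 ≤ q ω := ENNReal.toReal_nonneg
    rw [Real.norm_eq_abs, Real.norm_eq_abs, abs_mul]
    have h1 : |p ω| ≤ 1 := by rw [abs_of_nonneg hp0]; linarith
    calc |p ω| * |u ω| ≤ 1 * |u ω| := mul_le_mul_of_nonneg_right h1 (abs_nonneg _)
      _ = |u ω| := one_mul _
  have hint_qu : Integrable (fun ω => (Qm.rnDeriv ν ω).toReal * u ω) ν := by
    refine Integrable.mono (huν.integrable one_le_two) ((hqm.mul hum).aestronglyMeasurable) ?_
    filter_upwards [hadd] with ω e3
    have hp0 : 0 ≤ p ω := ENNReal.toReal_nonneg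
    have hq0 : 0 ≤ q ω := ENNReal.toReal_nonneg
    rw [Real.norm_eq_abs, Real.norm_eq_abs, abs_mul]
    have h1 : |q ω| ≤ 1 := by rw [abs_of_nonneg hq0]; linarith
    calc |q ω| * |u ω| ≤ 1 * |u ω| := mul_le_mul_of_nonneg_right h1 (abs_nonneg _)
      _ = |u ω| := one_mul _
  have hDint : D = ∫ ω, ((Pm.rnDeriv ν ω).toReal - (Qm.rnDeriv ν ω).toReal) * u ω ∂ν := by
    have e : ∀ ω, ((Pm.rnDeriv ν ω).toReal - (Qm.rnDeriv ν ω).toReal) * u ω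
        = (Pm.rnDeriv ν ω).toReal * u ω - (Qm.rnDeriv ν ω).toReal * u ω := fun ω => by ring
    calc D = (μ1 - c) - (μ2 - c) := by rw [hDdef]; ring
      _ = (∫ ω, (Pm.rnDeriv ν ω).toReal * u ω ∂ν) - ∫ ω, (Qm.rnDeriv ν ω).toReal * u ω ∂ν := by
          rw [hPu, hQu]
      _ = ∫ ω, ((Pm.rnDeriv ν ω).toReal * u ω - (Qm.rnDeriv ν ω).toReal * u ω) ∂ν :=
          (integral_sub hint_pu hint_qu).symm
      _ = ∫ ω, ((Pm.rnDeriv ν ω).toReal - (Qm.rnDeriv ν ω).toReal) * u ω ∂ν := by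
          refine integral_congr_ae (ae_of_all _ fun ω => ?_)
          exact (e ω).symm
  have hDfg1 : D = ∫ ω, (u ω * (f ω - g ω)) * (f ω + g ω) ∂ν := by
    rw [hDint]
    refine integral_congr_ae ?_
    filter_upwards [haef] with ω ⟨e1, e2, _, _⟩
    show (p ω - q ω) * u ω = _
    rw [← e1, ← e2]; ring
  have hDfg2 : D = ∫ ω, (u ω * (f ω + g ω)) * (f ω - g ω) ∂ν := by
    rw [hDint]
    refine integral_congr_ae ?_
    filter_upwards [haef] with ω ⟨e1, e2, _, _⟩
    show (p ω - q ω) * u ω = _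
    rw [← e1, ← e2]; ring
  have hmemuφ : MemLp (fun ω => u ω * (f ω - g ω)) 2 ν := by
    refine MemLp.of_le huν ((hum.mul (hfm.sub hgm)).aestronglyMeasurable) ?_
    filter_upwards [haef] with ω ⟨_, _, _, hf0, hf1, hg0, hg1⟩
    rw [Real.norm_eq_abs, Real.norm_eq_abs, abs_mul]
    have h1 : |f ω - g ω| ≤ 1 := by rw [abs_le]; constructor <;> linarith
    calc |u ω| * |f ω - g ω| ≤ |u ω| * 1 := mul_le_mul_of_nonneg_left h1 (abs_nonneg _)
      _ = |u ω| := mul_one _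
  have hmemuψ : MemLp (fun ω => u ω * (f ω + g ω)) 2 ν := by
    refine MemLp.of_le (huν.const_mul 2) ((hum.mul (hfm.add hgm)).aestronglyMeasurable) ?_
    filter_upwards [haef] with ω ⟨_, _, _, hf0, hf1, hg0, hg1⟩
    rw [Real.norm_eq_abs, Real.norm_eq_abs, abs_mul, abs_mul]
    have h1 : |f ω + g ω| ≤ 2 := by rw [abs_le]; constructor <;> linarith
    have h2 : |(2:ℝ)| = 2 := by norm_num
    rw [h2]
    calc |u ω| * |f ω + g ω| ≤ |u ω| * 2 := mul_le_mul_of_nonneg_left h1 (abs_nonneg _)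
      _ = 2 * |u ω| := by ring
  have hD1 : D^2 ≤ (∫ ω, (u ω * (f ω - g ω))^2 ∂ν) * (4 - 2 * sqHellinger Pm Qm) := by
    have := integral_sq_cauchy_schwarz' hmemuφ hmemψ
    rw [hpsi] at this
    rw [hDfg1]
    exact this
  have hD2 : D^2 ≤ (∫ ω, (u ω * (f ω + g ω))^2 ∂ν) * (2 * sqHellinger Pm Qm) := by
    have := integral_sq_cauchy_schwarz' hmemuψ hmemφ
    rw [hphi] at this
    rw [hDfg2]
    exact this
  have hsumsq : (∫ ω, (u ω * (f ω + g ω))^2 ∂ν) + (∫ ω, (u ω * (f ω - g ω))^2 ∂ν)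
      = 2 * ∫ ω, u ω^2 ∂ν := by
    rw [← integral_add hmemuψ.integrable_sq hmemuφ.integrable_sq, ← integral_const_mul]
    refine integral_congr_ae ?_
    filter_upwards [haef] with ω ⟨e1, e2, e3, _⟩
    have hfg1 : f ω^2 + g ω^2 = 1 := by rw [e1, e2]; exact e3
    have expand : (u ω * (f ω + g ω))^2 + (u ω * (f ω - g ω))^2
        = 2 * u ω^2 * (f ω^2 + g ω^2) := by ring
    rw [expand, hfg1]; ring
  have hIu2 : ∫ ω, u ω^2 ∂ν = (∫ ω, u ω^2 ∂Pm) + ∫ ω, u ω^2 ∂Qm := by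
    rw [hν]; exact integral_add_measure huP.integrable_sq huQ.integrable_sq
  have hvar : ∀ (μm : Measure Ω) (_ : IsProbabilityMeasure μm) (h2 : MemLp T 2 μm),
      ∫ ω, u ω^2 ∂μm = variance T μm + ((∫ ω, T ω ∂μm) - c)^2 := by
    intro μm hmp h2
    have step : ∫ ω, u ω^2 ∂μm
        = (∫ ω, T ω^2 ∂μm) - 2*c*(∫ ω, T ω ∂μm) + c^2 := by
      have e : ∀ ω, u ω^2 = (T ω^2 - (2*c)*T ω) + c^2 := fun ω => by rw [hu_def]; ring
      have hint1 : Integrable (fun a => T a^2 - (2*c)*T a) μm :=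
        Integrable.sub (h2.integrable_sq) ((h2.integrable one_le_two).const_mul (2*c))
      have hint2 : Integrable (fun a => (2*c)*T a) μm :=
        (h2.integrable one_le_two).const_mul (2*c)
      rw [integral_congr_ae (ae_of_all _ e), integral_add hint1 (integrable_const _),
        integral_sub h2.integrable_sq hint2, integral_const_mul]
      simp
    rw [step, variance_eq_sub h2]
    simp only [Pi.pow_apply]
    ring
  have hvarP := hvar Pm inferInstance hP2
  have hvarQ := hvar Qm inferInstance hQ2
  rw [← hμ1] at hvarP
  rw [← hμ2] at hvarQ
  have hmn : (∫ ω, (u ω * (f ω + g ω))^2 ∂ν) + (∫ ω, (u ω * (f ω - g ω))^2 ∂ν)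
      = 2 * (variance T Pm + variance T Qm) + D^2 := by
    rw [hsumsq, hIu2, hvarP, hvarQ]
    have e1 : μ1 - c = D/2 := by rw [hc, hDdef]; ring
    have e2 : μ2 - c = -(D/2) := by rw [hc, hDdef]; ring
    rw [e1, e2]
    ring
  have h4 : 0 ≤ 4 - 2 * sqHellinger Pm Qm := by linarith
  have h2h : 0 ≤ 2 * sqHellinger Pm Qm := by linarith
  have hkey2 : 4 * D^2 ≤ (2 * sqHellinger Pm Qm * (4 - 2 * sqHellinger Pm Qm))
      * (2 * (variance T Pm + variance T Qm) + D^2) := by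
    calc 4 * D^2 = D^2 * (4 - 2 * sqHellinger Pm Qm) + D^2 * (2 * sqHellinger Pm Qm) := by ring
      _ ≤ ((∫ ω, (u ω * (f ω + g ω))^2 ∂ν) * (2 * sqHellinger Pm Qm)) * (4 - 2 * sqHellinger Pm Qm)
          + ((∫ ω, (u ω * (f ω - g ω))^2 ∂ν) * (4 - 2 * sqHellinger Pm Qm))
            * (2 * sqHellinger Pm Qm) :=
          add_le_add (mul_le_mul_of_nonneg_right hD2 h4) (mul_le_mul_of_nonneg_right hD1 h2h)
      _ = (2 * sqHellinger Pm Qm * (4 - 2 * sqHellinger Pm Qm))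
          * ((∫ ω, (u ω * (f ω + g ω))^2 ∂ν) + (∫ ω, (u ω * (f ω - g ω))^2 ∂ν)) := by ring
      _ = _ := by rw [hmn]
  have hgoal : D^2 * (1 - sqHellinger Pm Qm)^2
      ≤ 2 * sqHellinger Pm Qm * (2 - sqHellinger Pm Qm)
        * (variance T Pm + variance T Qm) := by
    exact hellinger_alg h0 h_le_one hkey2
  calc ((∫ ω, T ω ∂Pm) - ∫ ω, T ω ∂Qm) ^ 2 * (1 - sqHellinger Pm Qm) ^ 2
      = D^2 * (1 - sqHellinger Pm Qm)^2 := by rw [hDdef, hμ1, hμ2]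
    _ ≤ _ := hgoal

/- The supremum of the worst-case variance is formalized by quantifying over all
upper bounds `V` of the variances `Var_θ(θ̂)`, `θ ∈ Θ`. -/
theorem stmt10 {Ω : Type*} [MeasurableSpace Ω] (Θ : Set ℝ) (P : ℝ → Measure Ω)
    (hprob : ∀ θ ∈ Θ, IsProbabilityMeasure (P θ))
    (T : Ω → ℝ) (hT : Measurable T) (hL2 : ∀ θ ∈ Θ, MemLp T 2 (P θ))
    (B : ℝ) (hB : 0 ≤ B)
    (hbias : ∀ θ ∈ Θ, |(∫ ω, T ω ∂(P θ)) - θ| ≤ B)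
    (θ θ' : ℝ) (hθ : θ ∈ Θ) (hθ' : θ' ∈ Θ) (hsep : 4 * B ≤ |θ - θ'|)
    (hr0 : 0 < hellinger (P θ) (P θ')) (hr1 : hellinger (P θ) (P θ') < 1)
    (V : ℝ) (hV : ∀ σ ∈ Θ, variance T (P σ) ≤ V) :
    ((θ - θ') ^ 2 / 4) / (4 - 2 * hellinger (P θ) (P θ') ^ 2)
        * (1 / hellinger (P θ) (P θ') - hellinger (P θ) (P θ')) ^ 2
      ≤ 2 * V := by
  haveI := hprob θ hθ
  haveI := hprob θ' hθ'
  have h0 : 0 ≤ sqHellinger (P θ) (P θ') := by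
    rw [sqHellinger]
    have : 0 ≤ ∫ ω, (Real.sqrt (((P θ).rnDeriv (P θ + P θ') ω).toReal)
        - Real.sqrt (((P θ').rnDeriv (P θ + P θ') ω).toReal)) ^ 2 ∂(P θ + P θ') :=
      integral_nonneg fun ω => sq_nonneg _
    linarith
  have hH2 : hellinger (P θ) (P θ') ^ 2 = sqHellinger (P θ) (P θ') := Real.sq_sqrt h0
  have hkey := key' (P θ) (P θ') T hT (hL2 θ hθ) (hL2 θ' hθ')
  set h : ℝ := sqHellinger (P θ) (P θ') with hh
  set H : ℝ := hellinger (P θ) (P θ') with hHdef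
  have hpos : 0 < h := by rw [← hH2]; positivity
  have hlt1 : h < 1 := by
    rw [← hH2]
    calc H^2 ≤ H*1 := by nlinarith [hr0.le, hr1]
      _ < 1 := by linarith
  set μ1 : ℝ := ∫ ω, T ω ∂(P θ) with hμ1
  set μ2 : ℝ := ∫ ω, T ω ∂(P θ') with hμ2
  have hb1 := hbias θ hθ
  have hb2 := hbias θ' hθ'
  have hDlow : |θ - θ'| / 2 ≤ |μ1 - μ2| := by
    have heq : θ - θ' = ((μ1 - μ2) + (θ - μ1)) + (μ2 - θ') := by ring
    have habs : |θ - θ'| ≤ |μ1 - μ2| + |θ - μ1| + |μ2 - θ'| := by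
      calc |θ - θ'| = |((μ1 - μ2) + (θ - μ1)) + (μ2 - θ')| := by rw [← heq]
        _ ≤ |(μ1 - μ2) + (θ - μ1)| + |μ2 - θ'| := abs_add_le _ _
        _ ≤ |μ1 - μ2| + |θ - μ1| + |μ2 - θ'| := by linarith [abs_add_le (μ1 - μ2) (θ - μ1)]
    have e1 : |θ - μ1| = |μ1 - θ| := abs_sub_comm _ _
    rw [e1] at habs
    linarith
  have hDsq : (θ - θ')^2/4 ≤ (μ1 - μ2)^2 := by
    have h1 : (|θ - θ'|/2)^2 ≤ |μ1 - μ2|^2 :=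
      pow_le_pow_left₀ (by positivity) hDlow 2
    rw [div_pow, sq_abs, sq_abs] at h1
    norm_num at h1
    exact h1
  have hVsum : variance T (P θ) + variance T (P θ') ≤ 2 * V := by
    have := hV θ hθ
    have := hV θ' hθ'
    linarith
  have hHne : H ≠ 0 := ne_of_gt hr0
  have efrac : 1/H - H = (1 - h)/H := by
    rw [← hH2]
    field_simp
  rw [efrac, div_pow, hH2]
  rw [div_mul_div_comm]
  rw [div_le_iff₀ (by nlinarith : (0:ℝ) < (4 - 2*h)*h)]
  have step1 : (θ - θ')^2/4 * (1 - h)^2 ≤ (μ1 - μ2)^2 * (1 - h)^2 :=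
    mul_le_mul_of_nonneg_right hDsq (sq_nonneg _)
  have step2 : (μ1 - μ2)^2 * (1 - h)^2
      ≤ 2 * h * (2 - h) * (variance T (P θ) + variance T (P θ')) := hkey
  have step3 : 2 * h * (2 - h) * (variance T (P θ) + variance T (P θ'))
      ≤ 2 * h * (2 - h) * (2 * V) :=
    mul_le_mul_of_nonneg_left hVsum (by nlinarith)
  nlinarith [step1, step2, step3]
end
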